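/- For every integer N ≥ 1 and real x with 0 ≤ x < 1/N, the identity ∑_{L=1}^{N} binom(N-1,L-1) · (Lx)^{L-1} · (1-Lx)^{N-L-1} = 1/(1-Nx) holds. -/

import Mathlib

open Finset fwdDiff

lemma fd_step (z : ℝ) (j : ℕ) :
    Δ_[z] (fun t : ℝ => t ^ j) = fun t =>
      ∑ i ∈ Finset.range j, ((j.choose i : ℝ) * z ^ (j - i)) * t ^ i := by
  funext t
  have h := add_pow t z j
  rw [Finset.sum_range_succ] at h
  simp only [fwdDiff, h, Nat.sub_self, pow_zero, Nat.choose_self, Nat.cast_one, mul_one,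
    add_sub_cancel_right]
  exact Finset.sum_congr rfl fun i _ => by ring

lemma fd_main (z : ℝ) : ∀ m : ℕ,
    (∀ j, j < m → ∀ y : ℝ, (Δ_[z])^[m] (fun t : ℝ => t ^ j) y = 0) ∧
    ∀ y : ℝ, (Δ_[z])^[m] (fun t : ℝ => t ^ m) y = (m.factorial : ℝ) * z ^ m := by
  intro m
  induction m with
  | zero =>
    exact ⟨fun j hj => absurd hj (Nat.not_lt_zero j), fun y => by simp⟩
  | succ m ih =>
    have key : ∀ (j : ℕ) (y : ℝ), (Δ_[z])^[m+1] (fun t : ℝ => t ^ j) y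
        = ∑ i ∈ Finset.range j,
            ((j.choose i : ℝ) * z ^ (j - i)) * (Δ_[z])^[m] (fun t : ℝ => t ^ i) y := by
      intro j y
      rw [Function.iterate_succ_apply, fd_step z j]
      have h2 : (fun t : ℝ => ∑ i ∈ Finset.range j, ((j.choose i : ℝ) * z ^ (j - i)) * t ^ i)
          = ∑ i ∈ Finset.range j, ((j.choose i : ℝ) * z ^ (j - i)) • (fun t : ℝ => t ^ i) := by
        funext t
        simp [Finset.sum_apply]
      rw [h2, fwdDiff_iter_finset_sum, Finset.sum_apply]
      exact Finset.sum_congr rfl fun i _ => by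
        rw [fwdDiff_iter_const_smul]; simp
    constructor
    · intro j hj y
      rw [key j y]
      refine Finset.sum_eq_zero fun i hi => ?_
      rw [ih.1 i (by simp at hi; omega) y, mul_zero]
    · intro y
      rw [key (m+1) y, Finset.sum_range_succ]
      rw [Finset.sum_eq_zero fun i hi => by
        rw [ih.1 i (by simpa using hi) y, mul_zero]]
      rw [ih.2 y]
      simp [Nat.factorial_succ]
      ring

lemma alt_sum (z a : ℝ) (m : ℕ) :
    ∑ k ∈ Finset.range (m+1), (-1:ℝ) ^ (m - k) * (m.choose k : ℝ) * (a + k * z) ^ m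
      = (m.factorial : ℝ) * z ^ m := by
  have h := fwdDiff_iter_eq_sum_shift z (fun t : ℝ => t ^ m) m a
  rw [(fd_main z m).2 a] at h
  rw [h]
  refine Finset.sum_congr rfl fun k _ => ?_
  simp only [zsmul_eq_mul, nsmul_eq_mul]
  push_cast
  ring

lemma abel_indep (n : ℕ) (z s a : ℝ) :
    ∑ k ∈ Finset.range (n+1), (n.choose k : ℝ) * (a + k * z) ^ k * (s - a - k * z) ^ (n - k)
      = ∑ m ∈ Finset.range (n+1), (n.choose m : ℝ) * (m.factorial : ℝ) * z ^ m * s ^ (n - m) := by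
  have expand : ∀ k ∈ Finset.range (n+1),
      (n.choose k : ℝ) * (a + k * z) ^ k * (s - a - k * z) ^ (n - k)
        = ∑ j ∈ Finset.range (n - k + 1),
            ((n.choose k : ℝ) * ((n-k).choose j : ℝ) * (-1:ℝ)^j * (a + k*z)^(k+j) * s^(n-k-j)) := by
    intro k hk
    have h1 : s - a - (k:ℝ)*z = (-(a + k*z)) + s := by ring
    have h2 : (-(a + (k:ℝ)*z) + s)^(n-k)
        = ∑ j ∈ Finset.range (n-k+1), (-(a+(k:ℝ)*z))^j * s^(n-k-j) * ((n-k).choose j) :=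
      add_pow _ _ _
    rw [h1, h2, Finset.mul_sum]
    apply Finset.sum_congr rfl
    intro j hj
    rw [neg_pow, pow_add]
    ring
  rw [Finset.sum_congr rfl expand]
  have key : ∑ k ∈ Finset.range (n+1), ∑ j ∈ Finset.range (n - k + 1),
        ((n.choose k : ℝ) * ((n-k).choose j : ℝ) * (-1:ℝ)^j * (a + k*z)^(k+j) * s^(n-k-j))
      = ∑ m ∈ Finset.range (n+1), ∑ k ∈ Finset.range (m+1),
        ((n.choose k : ℝ) * ((n-k).choose (m-k) : ℝ) * (-1:ℝ)^(m-k) * (a + k*z)^m * s^(n-m)) := by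
    rw [Finset.sum_sigma' (Finset.range (n+1)) (fun k => Finset.range (n-k+1)),
        Finset.sum_sigma' (Finset.range (n+1)) (fun m => Finset.range (m+1))]
    refine Finset.sum_nbij' (fun x => ⟨x.1 + x.2, x.1⟩) (fun y => ⟨y.2, y.1 - y.2⟩)
      ?_ ?_ ?_ ?_ ?_
    · rintro ⟨k, j⟩ hx
      simp only [Finset.mem_sigma, Finset.mem_range] at hx ⊢
      omega
    · rintro ⟨m, k⟩ hy
      simp only [Finset.mem_sigma, Finset.mem_range] at hy ⊢
      omega
    · rintro ⟨k, j⟩ hx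
      simp
    · rintro ⟨m, k⟩ hy
      simp only [Finset.mem_sigma, Finset.mem_range] at hy
      have h1 : k + (m - k) = m := by omega
      simp [h1]
    · rintro ⟨k, j⟩ hx
      simp only [Finset.mem_sigma, Finset.mem_range] at hx
      have h1 : k + j - k = j := by omega
      have h2 : n - k - j = n - (k + j) := by omega
      rw [h1, h2]
  rw [key]
  refine Finset.sum_congr rfl fun m hm => ?_
  simp only [Finset.mem_range] at hm
  have hmn : m ≤ n := by omega
  have inner : ∀ k ∈ Finset.range (m+1),
      ((n.choose k : ℝ) * ((n-k).choose (m-k) : ℝ) * (-1:ℝ)^(m-k) * (a + k*z)^m * s^(n-m))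
        = (n.choose m : ℝ) * s^(n-m) * ((-1:ℝ)^(m-k) * (m.choose k : ℝ) * (a + k*z)^m) := by
    intro k hk
    simp only [Finset.mem_range] at hk
    have h := Nat.choose_mul (n := n) (show k ≤ m by omega)
    have h' : (n.choose m : ℝ) * (m.choose k : ℝ) = (n.choose k : ℝ) * ((n-k).choose (m-k) : ℝ) := by
      exact_mod_cast congrArg (Nat.cast (R := ℝ)) h
    rw [← mul_assoc, ← mul_assoc]
    rw [show (n.choose k : ℝ) * ((n-k).choose (m-k) : ℝ) * (-1:ℝ)^(m-k) * (a + k*z)^m * s^(n-m)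
      = ((n.choose k : ℝ) * ((n-k).choose (m-k) : ℝ)) * ((-1:ℝ)^(m-k) * (a + k*z)^m * s^(n-m)) from by ring, ← h']
    ring
  rw [Finset.sum_congr rfl inner, ← Finset.mul_sum, alt_sum z a m]
  ring

theorem abelian_expectation_identity (N : ℕ) (hN : 1 ≤ N) (x : ℝ)
    (hx0 : 0 ≤ x) (hx1 : x < 1 / N) :
    ∑ L ∈ Finset.Icc 1 N,
      ((N - 1).choose (L - 1) : ℝ) * (L * x) ^ (L - 1) *
        (1 - L * x) ^ ((N : ℤ) - L - 1) = 1 / (1 - N * x) := by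
  obtain ⟨n, rfl⟩ : ∃ n, N = n + 1 := ⟨N - 1, by omega⟩
  have hN0 : (0:ℝ) < ((n+1 : ℕ) : ℝ) := by positivity
  have hNx : ((n+1:ℕ):ℝ) * x < 1 := by
    rw [lt_div_iff₀ hN0] at hx1
    linarith
  have hpos : (0:ℝ) < 1 - ((n+1:ℕ):ℝ) * x := by linarith
  have hne : (1 - ((n+1:ℕ):ℝ) * x) ≠ 0 := ne_of_gt hpos
  rw [eq_div_iff hne, Finset.sum_mul]
  have hterm : ∀ L ∈ Finset.Icc 1 (n+1),
      ((n+1-1).choose (L-1) : ℝ) * ((L:ℝ)*x)^(L-1) * (1 - (L:ℝ)*x)^(((n+1:ℕ):ℤ) - (L:ℤ) - 1)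
          * (1 - ((n+1:ℕ):ℝ)*x)
        = (n.choose (L-1) : ℝ) * ((L:ℝ)*x)^(L-1) * (1 - (L:ℝ)*x)^((n+1-L : ℕ))
          - (n.choose L : ℝ) * ((L:ℝ)*x)^L * (1 - (L:ℝ)*x)^((n - L : ℕ)) := by
    intro L hL
    simp only [Finset.mem_Icc] at hL
    obtain ⟨hL1, hL2⟩ := hL
    have hLx : (L:ℝ) * x ≤ ((n+1:ℕ):ℝ) * x := by
      apply mul_le_mul_of_nonneg_right _ hx0
      exact_mod_cast hL2
    have h0 : (0:ℝ) < 1 - (L:ℝ)*x := by linarith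
    have h0' : (1:ℝ) - (L:ℝ)*x ≠ 0 := ne_of_gt h0
    simp only [Nat.add_sub_cancel]
    rcases eq_or_lt_of_le hL2 with hEq | hLt
    · -- L = n + 1
      subst hEq
      have he : ((n+1:ℕ):ℤ) - ((n+1:ℕ):ℤ) - 1 = -1 := by push_cast; ring
      rw [he]
      simp only [Nat.add_sub_cancel, Nat.sub_self, pow_zero, mul_one,
        Nat.choose_succ_self, Nat.cast_zero, zero_mul, sub_zero, zpow_neg_one]
      rw [mul_assoc, inv_mul_cancel₀ h0', mul_one]
    · -- L ≤ n
      have hLn : L ≤ n := by omega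
      have hz : (1 - (L:ℝ)*x)^(((n+1:ℕ):ℤ) - (L:ℤ) - 1) = (1 - (L:ℝ)*x)^((n - L : ℕ)) := by
        rw [show ((n+1:ℕ):ℤ) - (L:ℤ) - 1 = ((n - L : ℕ) : ℤ) from by push_cast [Nat.cast_sub hLn]; ring,
          zpow_natCast]
      rw [hz]
      have hc : (n.choose L : ℝ) * (L:ℝ) = (n.choose (L-1) : ℝ) * (((n:ℝ)+1) - (L:ℝ)) := by
        have h := Nat.choose_succ_right_eq n (L-1)
        rw [show L - 1 + 1 = L from by omega] at h
        have hcast : ((n - (L-1) : ℕ) : ℝ) = (n:ℝ) + 1 - (L:ℝ) := by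
          rw [Nat.cast_sub (by omega)]
          push_cast [Nat.cast_sub (by omega : 1 ≤ L)]
          ring
        have h' : (n.choose L : ℝ) * ((L:ℝ)) = (n.choose (L-1) : ℝ) * ((n - (L-1) : ℕ) : ℝ) := by
          exact_mod_cast congrArg (Nat.cast (R := ℝ)) h
        rw [h', hcast]
      have hp : ((L:ℝ)*x)^L = ((L:ℝ)*x)^(L-1) * ((L:ℝ)*x) := by
        rw [← pow_succ, Nat.sub_add_cancel hL1]
      have hq : (1 - (L:ℝ)*x)^(n+1-L) = (1 - (L:ℝ)*x)^(n-L) * (1 - (L:ℝ)*x) := by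
        rw [show n+1-L = (n-L)+1 from by omega, pow_succ]
      rw [hp, hq]
      push_cast
      linear_combination (((L:ℝ)*x)^(L-1) * (1 - (L:ℝ)*x)^(n-L) * x) * hc
  rw [Finset.sum_congr rfl hterm, Finset.sum_sub_distrib]
  -- reindex the first sum
  have hf : ∑ L ∈ Finset.Icc 1 (n+1),
      (n.choose (L-1) : ℝ) * ((L:ℝ)*x)^(L-1) * (1 - (L:ℝ)*x)^((n+1-L : ℕ))
      = ∑ i ∈ Finset.range (n+1),
        (n.choose i : ℝ) * (x + (i:ℝ)*x)^i * (1 - x - (i:ℝ)*x)^((n-i : ℕ)) := by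
    rw [← Finset.Ico_add_one_right_eq_Icc, Finset.sum_Ico_eq_sum_range]
    simp only [Nat.add_sub_cancel]
    refine Finset.sum_congr (by norm_num) fun i hi => ?_
    simp only [Finset.mem_range] at hi
    rw [show 1 + i - 1 = i from by omega, show n + 1 - (1 + i) = n - i from by omega]
    push_cast
    ring_nf
  -- second sum
  have hg : ∑ L ∈ Finset.Icc 1 (n+1),
      (n.choose L : ℝ) * ((L:ℝ)*x)^L * (1 - (L:ℝ)*x)^((n - L : ℕ))
      = (∑ k ∈ Finset.range (n+1),
        (n.choose k : ℝ) * (0 + (k:ℝ)*x)^k * (1 - 0 - (k:ℝ)*x)^((n-k : ℕ))) - 1 := by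
    have e0 : ∀ k : ℕ, (n.choose k : ℝ) * (0 + (k:ℝ)*x)^k * (1 - 0 - (k:ℝ)*x)^((n-k : ℕ))
        = (n.choose k : ℝ) * ((k:ℝ)*x)^k * (1 - (k:ℝ)*x)^((n-k : ℕ)) := by
      intro k; norm_num
    simp only [e0]
    set F : ℕ → ℝ := fun L => (n.choose L : ℝ) * ((L:ℝ)*x)^L * (1 - (L:ℝ)*x)^((n - L : ℕ))
      with hF
    calc ∑ L ∈ Finset.Icc 1 (n+1), F L
        = ∑ i ∈ Finset.range (n+1), F (1+i) := by
          rw [← Finset.Ico_add_one_right_eq_Icc, Finset.sum_Ico_eq_sum_range]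
          norm_num
      _ = ∑ i ∈ Finset.range (n+1), F (i+1) := by simp only [add_comm 1]
      _ = (∑ L ∈ Finset.range (n+2), F L) - F 0 := by
          rw [Finset.sum_range_succ' F (n+1)]; ring
      _ = (∑ L ∈ Finset.range (n+1), F L) + F (n+1) - F 0 := by
          rw [Finset.sum_range_succ]
      _ = (∑ L ∈ Finset.range (n+1), F L) - 1 := by
          have h1 : F (n+1) = 0 := by simp [hF, Nat.choose_succ_self]
          have h2 : F 0 = 1 := by simp [hF]
          rw [h1, h2]; ring
  rw [hf, hg, abel_indep n x 1 x, abel_indep n x 1 0]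
  ring
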